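/- arXiv:1706.05264 — 3 statements merged into one kernel-verified Lean document; each statement's English description precedes it below -/
import Mathlib

section
/- Let p and q be probability distributions on k elements with non-increasingly ordered entries such that p does not majorize q, and set δ* = 2 max_{l ∈ {1,…,k}} Σ_{i=1}^l (q_i − p_i). Then the steepest δ*-approximation of p majorizes q, i.e. p̄^(δ*) ≻ q, and for every δ with 0 ≤ δ < δ* the steepest δ-approximation of p does not majorize q; that is, δ* is the minimal δ such that p̄^(δ) ≻ q. -/
open Finset

noncomputable section

/-- The ℓ¹ distance `‖a − b‖ = Σᵢ |aᵢ − bᵢ|` between two vectors in `ℝ^k`. -/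
def l1dist {k : ℕ} (a b : Fin k → ℝ) : ℝ := ∑ i, |a i - b i|

/-- A probability distribution on `k` elements: nonnegative entries summing to 1. -/
def IsProbDist {k : ℕ} (p : Fin k → ℝ) : Prop := (∀ i, 0 ≤ p i) ∧ ∑ i, p i = 1

/-- The vector `a` rearranged in non-increasing order, `a↓`. -/
def descSort {k : ℕ} (a : Fin k → ℝ) : Fin k → ℝ := fun i => a (Tuple.sort a i.rev)

/-- The sum of the first `l` entries of `a` (1-based indexing: entries `1,…,l`). -/
def psum {k : ℕ} (a : Fin k → ℝ) (l : ℕ) : ℝ :=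
  ∑ i ∈ univ.filter (fun i : Fin k => (i : ℕ) < l), a i

/-- The sum of the entries of `a` from position `l` to `k` (1-based indexing). -/
def tailSum {k : ℕ} (a : Fin k → ℝ) (l : ℕ) : ℝ :=
  ∑ i ∈ univ.filter (fun i : Fin k => l ≤ (i : ℕ) + 1), a i

/-- `a` majorizes `b` (`a ≻ b`): the total sums agree and all partial sums of the
non-increasing rearrangements satisfy `Σ_{i=1}^l a↓ᵢ ≥ Σ_{i=1}^l b↓ᵢ` for `l = 1,…,k`. -/
def Majorizes {k : ℕ} (a b : Fin k → ℝ) : Prop :=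
  (∑ i, a i = ∑ i, b i) ∧
  ∀ l : ℕ, 1 ≤ l → l ≤ k → psum (descSort b) l ≤ psum (descSort a) l

/-- The distribution `e₁ = (1,0,…,0)`. -/
def e1 (k : ℕ) : Fin k → ℝ := fun i => if (i : ℕ) = 0 then 1 else 0

/-- The uniform distribution `η = (1/k,…,1/k)`. -/
def unif (k : ℕ) : Fin k → ℝ := fun _ => (k : ℝ)⁻¹

/-- The unnormalised vector `r` in the construction of the steepest approximation:
`r₁ = p₁ + δ/2`, `rᵢ = pᵢ` otherwise. -/
def steepR {k : ℕ} (δ : ℝ) (p : Fin k → ℝ) : Fin k → ℝ :=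
  fun i => if (i : ℕ) = 0 then p i + δ / 2 else p i

/-- `lstar ∈ {1,…,k}` is the truncation index of the steepest `δ`-approximation of `p`:
`Σ_{i=1}^{l*} rᵢ ≤ 1 < Σ_{i=1}^{l*+1} rᵢ` (the second sum being meaningful for `l* < k`). -/
def IsTruncIdx {k : ℕ} (δ : ℝ) (p : Fin k → ℝ) (lstar : ℕ) : Prop :=
  1 ≤ lstar ∧ lstar ≤ k ∧ psum (steepR δ p) lstar ≤ 1 ∧
    (lstar < k → 1 < psum (steepR δ p) (lstar + 1))

/-- `pbar` is the steepest `δ`-approximation `p̄^(δ)` of `p` (assumed non-increasingly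
ordered): if `‖p − e₁‖ ≤ δ` then `pbar = e₁`; otherwise `pbar` agrees with `r` on the
first `l*` entries, has `1 − Σ_{i=1}^{l*} rᵢ` at position `l*+1`, and `0` afterwards. -/
def IsSteepest {k : ℕ} (δ : ℝ) (p pbar : Fin k → ℝ) : Prop :=
  (l1dist p (e1 k) ≤ δ ∧ pbar = e1 k) ∨
  (δ < l1dist p (e1 k) ∧ ∃ lstar : ℕ, IsTruncIdx δ p lstar ∧
    ∀ i : Fin k, pbar i =
      if (i : ℕ) < lstar then steepR δ p i
      else if (i : ℕ) = lstar then 1 - psum (steepR δ p) lstar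
      else 0)

/-- `ε(x) = Σ_{i : pᵢ ≥ x} (pᵢ − x)`. -/
def epsFn {k : ℕ} (p : Fin k → ℝ) (x : ℝ) : ℝ :=
  ∑ i ∈ univ.filter (fun i : Fin k => x ≤ p i), (p i - x)

/-- `γ(y) = Σ_{i : pᵢ ≤ y} (y − pᵢ)`. -/
def gammaFn {k : ℕ} (p : Fin k → ℝ) (y : ℝ) : ℝ :=
  ∑ i ∈ univ.filter (fun i : Fin k => p i ≤ y), (y - p i)

/-- `pflat` is the flattest `δ`-approximation of `p` built from the cutting level `x*` and
the filling level `y*`: `x*, y* ∈ [0,1]`, `ε(x*) = γ(y*) = δ/2`, and `pflat` equals `x*`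
where `pᵢ ≥ x*`, equals `y*` where `pᵢ ≤ y*`, and equals `pᵢ` otherwise. -/
def IsFlattestWith {k : ℕ} (δ : ℝ) (p pflat : Fin k → ℝ) (x y : ℝ) : Prop :=
  x ∈ Set.Icc (0 : ℝ) 1 ∧ y ∈ Set.Icc (0 : ℝ) 1 ∧
  epsFn p x = δ / 2 ∧ gammaFn p y = δ / 2 ∧
  ∀ i : Fin k, pflat i = if x ≤ p i then x else if p i ≤ y then y else p i

/-- `pflat` is the flattest `δ`-approximation `p̲^(δ)` of `p` (assumed non-increasingly
ordered): if `‖p − η‖ ≤ δ` then `pflat = η`; otherwise it is obtained by cutting at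
level `x*` and filling at level `y*`. -/
def IsFlattest {k : ℕ} (δ : ℝ) (p pflat : Fin k → ℝ) : Prop :=
  (l1dist p (unif k) ≤ δ ∧ pflat = unif k) ∨
  (δ < l1dist p (unif k) ∧ ∃ x y : ℝ, IsFlattestWith δ p pflat x y)

end
section MyHelpers
open Finset

variable {k : ℕ}

private lemma my_descSort_eq_self {f : Fin k → ℝ} (hf : Antitone f) : descSort f = f := by
  have h1 : Monotone (f ∘ (Tuple.sort f)) := Tuple.monotone_sort f
  have h2 : Monotone (f ∘ (Fin.revPerm : Equiv.Perm (Fin k))) := by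
    intro i j hij
    exact hf (Fin.rev_le_rev.mpr hij)
  have h3 := Tuple.unique_monotone h1 h2
  funext i
  have h4 := congrFun h3 i.rev
  simp only [Function.comp_apply, Fin.revPerm_apply, Fin.rev_rev] at h4
  simpa [descSort] using h4

private lemma my_filter_lt_succ {l : ℕ} (hl : l < k) :
    (univ.filter (fun i : Fin k => (i:ℕ) < l + 1)) =
      insert (⟨l, hl⟩ : Fin k) (univ.filter (fun i : Fin k => (i:ℕ) < l)) := by
  ext i
  simp only [mem_filter, mem_univ, true_and, mem_insert, Fin.ext_iff]
  omega

private lemma my_psum_succ (a : Fin k → ℝ) {l : ℕ} (hl : l < k) :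
    psum a (l+1) = psum a l + a ⟨l, hl⟩ := by
  unfold psum
  rw [my_filter_lt_succ hl, Finset.sum_insert (by simp)]
  ring

private lemma my_psum_mono_len {a : Fin k → ℝ} (ha : ∀ i, 0 ≤ a i) {l m : ℕ} (h : l ≤ m) :
    psum a l ≤ psum a m := by
  apply Finset.sum_le_sum_of_subset_of_nonneg
  · intro i hi
    simp only [mem_filter, mem_univ, true_and] at *
    omega
  · exact fun i _ _ => ha i

private lemma my_psum_nonneg {a : Fin k → ℝ} (ha : ∀ i, 0 ≤ a i) (l : ℕ) :
    0 ≤ psum a l := Finset.sum_nonneg fun i _ => ha i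

private lemma my_psum_le_total {a : Fin k → ℝ} (ha : ∀ i, 0 ≤ a i) (l : ℕ) :
    psum a l ≤ ∑ i, a i :=
  Finset.sum_le_sum_of_subset_of_nonneg (Finset.filter_subset _ _) (fun i _ _ => ha i)

private lemma my_psum_univ (a : Fin k → ℝ) : psum a k = ∑ i, a i := by
  unfold psum
  congr 1
  ext i
  simp [i.isLt]

private lemma my_psum_one (hk : 0 < k) (a : Fin k → ℝ) : psum a 1 = a ⟨0, hk⟩ := by
  unfold psum
  have : (univ.filter (fun i : Fin k => (i:ℕ) < 1)) = {(⟨0, hk⟩ : Fin k)} := by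
    ext i
    simp [Fin.ext_iff, Nat.lt_one_iff]
  rw [this, Finset.sum_singleton]

private lemma my_psum_le_psum {a b : Fin k → ℝ} (h : ∀ i, a i ≤ b i) (l : ℕ) :
    psum a l ≤ psum b l := Finset.sum_le_sum fun i _ => h i

private lemma my_psum_steepR (δ : ℝ) (p : Fin k → ℝ) {l : ℕ} (hk : 0 < k) (hl : 1 ≤ l) :
    psum (steepR δ p) l = psum p l + δ / 2 := by
  unfold psum
  have h1 : ∀ i ∈ univ.filter (fun i : Fin k => (i:ℕ) < l),
      steepR δ p i = p i + (if i = (⟨0, hk⟩ : Fin k) then δ/2 else 0) := by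
    intro i _
    unfold steepR
    by_cases h : (i:ℕ) = 0 <;> simp [h, Fin.ext_iff]
  rw [Finset.sum_congr rfl h1, Finset.sum_add_distrib, Finset.sum_ite_eq']
  have hmem : (⟨0, hk⟩ : Fin k) ∈ univ.filter (fun i : Fin k => (i:ℕ) < l) := by
    simp; omega
  rw [if_pos hmem]

private lemma my_steepR_nonneg {δ : ℝ} (hδ : 0 ≤ δ) {p : Fin k → ℝ} (hp : ∀ i, 0 ≤ p i)
    (i : Fin k) : 0 ≤ steepR δ p i := by
  unfold steepR
  split_ifs <;> [linarith [hp i]; exact hp i]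

private lemma my_steepR_antitone {δ : ℝ} (hδ : 0 ≤ δ) {p : Fin k → ℝ} (hp : Antitone p) :
    Antitone (steepR δ p) := by
  intro i j hij
  unfold steepR
  by_cases hj : (j:ℕ) = 0
  · have hi : (i:ℕ) = 0 := by
      have := Fin.le_def.mp hij; omega
    simp [hi, hj]
    exact hp hij
  · by_cases hi : (i:ℕ) = 0 <;> simp [hi, hj] <;> [linarith [hp hij]; exact hp hij]

private lemma my_sum_e1 (hk : 0 < k) : ∑ i, e1 k i = 1 := by
  unfold e1
  have h1 : ∀ i ∈ (univ : Finset (Fin k)),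
      (if (i:ℕ) = 0 then (1:ℝ) else 0) = (if i = (⟨0, hk⟩ : Fin k) then (1:ℝ) else 0) := by
    intro i _
    simp [Fin.ext_iff]
  rw [Finset.sum_congr rfl h1, Finset.sum_ite_eq']
  simp

private lemma my_e1_antitone : Antitone (e1 k) := by
  intro i j hij
  unfold e1
  by_cases hj : (j:ℕ) = 0
  · have hi : (i:ℕ) = 0 := by have := Fin.le_def.mp hij; omega
    simp [hi, hj]
  · by_cases hi : (i:ℕ) = 0 <;> simp [hi, hj]

private lemma my_l1dist_e1 (hk : 0 < k) {p : Fin k → ℝ} (hp : IsProbDist p) :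
    l1dist p (e1 k) = 2 - 2 * p ⟨0, hk⟩ := by
  obtain ⟨hp0, hps⟩ := hp
  have hple : p ⟨0, hk⟩ ≤ 1 := by
    rw [← hps]
    exact Finset.single_le_sum (fun i _ => hp0 i) (mem_univ _)
  unfold l1dist e1
  have h1 : ∀ i ∈ (univ : Finset (Fin k)),
      |p i - (if (i:ℕ) = 0 then (1:ℝ) else 0)|
        = p i + (if i = (⟨0, hk⟩ : Fin k) then 1 - 2 * p i else 0) := by
    intro i _
    by_cases h : (i:ℕ) = 0
    · have hieq : i = (⟨0, hk⟩ : Fin k) := Fin.ext h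
      rw [hieq] at *
      simp [h, abs_of_nonpos (by linarith : p (⟨0,hk⟩ : Fin k) - 1 ≤ 0)]
      ring
    · simp [h, Fin.ext_iff, abs_of_nonneg (hp0 i)]
  rw [Finset.sum_congr rfl h1, Finset.sum_add_distrib, Finset.sum_ite_eq', hps]
  simp
  ring

/-- Core facts about the truncated steepest approximation. -/
private lemma my_steepest_facts {δ : ℝ} {p pbar : Fin k → ℝ} (hδ : 0 ≤ δ)
    (hpord : Antitone p) (hp0 : ∀ i, 0 ≤ p i)
    {lstar : ℕ} (ht : IsTruncIdx δ p lstar)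
    (hf : ∀ i : Fin k, pbar i =
      if (i : ℕ) < lstar then steepR δ p i
      else if (i : ℕ) = lstar then 1 - psum (steepR δ p) lstar
      else 0) :
    Antitone pbar ∧ (∀ i, pbar i ≤ steepR δ p i) ∧
    (∀ l, l ≤ lstar → psum pbar l = psum (steepR δ p) l) ∧
    (∀ l, lstar < l → l ≤ k → psum pbar l = 1) := by
  obtain ⟨hl1, hlk, hle, hgt⟩ := ht
  set r := steepR δ p with hr
  have hrnn : ∀ i, 0 ≤ r i := my_steepR_nonneg hδ hp0
  have hrant : Antitone r := my_steepR_antitone hδ hpord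
  -- key: the value at lstar is below r there
  have hkey : ∀ h : lstar < k, 1 - psum r lstar ≤ r ⟨lstar, h⟩ := by
    intro h
    have := hgt h
    rw [my_psum_succ r h] at this
    linarith
  have hpnn : ∀ i, 0 ≤ pbar i := by
    intro i
    rw [hf i]
    split_ifs with h1 h2
    · exact hrnn i
    · linarith
    · exact le_refl 0
  have hble : ∀ i, pbar i ≤ r i := by
    intro i
    rw [hf i]
    split_ifs with h1 h2
    · exact le_refl _
    · have hieq : i = ⟨lstar, h2 ▸ i.isLt⟩ := Fin.ext h2
      rw [hieq]
      exact hkey _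
    · exact hrnn i
  have hant : Antitone pbar := by
    intro i j hij
    rw [hf i, hf j]
    have hvij : (i:ℕ) ≤ (j:ℕ) := Fin.le_def.mp hij
    by_cases hjl : (j:ℕ) < lstar
    · have hil : (i:ℕ) < lstar := by omega
      simp only [hjl, hil, if_pos]
      exact hrant hij
    · by_cases hje : (j:ℕ) = lstar
      · by_cases hil : (i:ℕ) < lstar
        · simp only [hjl, hje, hil, if_pos, if_neg (lt_irrefl _), if_neg]
          have hjlt : lstar < k := hje ▸ j.isLt
          calc 1 - psum r lstar ≤ r ⟨lstar, hjlt⟩ := hkey hjlt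
            _ ≤ r i := hrant (by rw [Fin.le_def]; simpa [hje] using le_of_lt hil)
          -- careful: need r ⟨lstar⟩ ≤ r i, i.e. i ≤ ⟨lstar⟩
        · have hie : (i:ℕ) = lstar := by omega
          simp [hjl, hje, hil, hie]
      · -- j > lstar : pbar j = 0
        have hjg : lstar < (j:ℕ) := by omega
        simp only [if_neg hjl, if_neg hje]
        split_ifs with h1 h2
        · exact hrnn i
        · linarith
        · exact le_refl 0
  refine ⟨hant, hble, ?_, ?_⟩
  · intro l hl
    unfold psum
    apply Finset.sum_congr rfl
    intro i hi
    simp only [mem_filter, mem_univ, true_and] at hi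
    rw [hf i, if_pos (by omega)]
  · intro l hl hlk2
    have base : psum pbar (lstar + 1) = 1 := by
      have hlt : lstar < k := by omega
      rw [my_psum_succ pbar hlt]
      have h1 : psum pbar lstar = psum r lstar := by
        unfold psum
        apply Finset.sum_congr rfl
        intro i hi
        simp only [mem_filter, mem_univ, true_and] at hi
        rw [hf i, if_pos hi]
      have h2 : pbar ⟨lstar, hlt⟩ = 1 - psum r lstar := by
        rw [hf ⟨lstar, hlt⟩]
        simp
      rw [h1, h2]
      ring
    -- induct from lstar+1 up to l
    have : ∀ m, lstar + 1 ≤ m → m ≤ k → psum pbar m = 1 := by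
      intro m
      induction m with
      | zero => omega
      | succ n ih =>
        intro hn hnk
        by_cases hcase : lstar + 1 ≤ n
        · have hnlt : n < k := by omega
          rw [my_psum_succ pbar hnlt, ih hcase (by omega)]
          have : pbar ⟨n, hnlt⟩ = 0 := by
            rw [hf ⟨n, hnlt⟩]
            simp only
            rw [if_neg (by omega), if_neg (by omega)]
          rw [this]; ring
        · have : n = lstar := by omega
          subst this
          exact base
    exact this l (by omega) hlk2

end MyHelpers

/-- if `p ⊁ q` then `δ* = 2 max_{1 ≤ l ≤ k} Σ_{i=1}^l (qᵢ − pᵢ)` is the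
minimal `δ` such that the steepest `δ`-approximation of `p` majorizes `q`. -/
theorem min_delta_steepest {k : ℕ}
    (p q : Fin k → ℝ) (hp : IsProbDist p) (hq : IsProbDist q)
    (hpord : Antitone p) (hqord : Antitone q) (hnmaj : ¬ Majorizes p q)
    (δstar : ℝ)
    (hub : ∀ l : ℕ, 1 ≤ l → l ≤ k → 2 * (psum q l - psum p l) ≤ δstar)
    (hmem : ∃ l : ℕ, 1 ≤ l ∧ l ≤ k ∧ δstar = 2 * (psum q l - psum p l)) :
    (∀ pbar : Fin k → ℝ, IsSteepest δstar p pbar → Majorizes pbar q) ∧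
    (∀ δ : ℝ, 0 ≤ δ → δ < δstar →
      ∀ pbar : Fin k → ℝ, IsSteepest δ p pbar → ¬ Majorizes pbar q) := by
  obtain ⟨hp0, hps⟩ := hp
  obtain ⟨hq0, hqs⟩ := hq
  obtain ⟨l0, hl01, hl0k, hδs⟩ := hmem
  have hk : 0 < k := lt_of_lt_of_le hl01 hl0k
  have hdp : descSort p = p := my_descSort_eq_self hpord
  have hdq : descSort q = q := my_descSort_eq_self hqord
  have hql : ∀ l, psum q l ≤ 1 := fun l => hqs ▸ my_psum_le_total hq0 l
  -- positivity of δstar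
  have hnm : ∃ l : ℕ, 1 ≤ l ∧ l ≤ k ∧ psum p l < psum q l := by
    by_contra h
    push_neg at h
    exact hnmaj ⟨hps.trans hqs.symm, fun l h1 h2 => by
      rw [hdp, hdq]; exact h l h1 h2⟩
  have hδpos : 0 < δstar := by
    obtain ⟨l, h1, h2, h3⟩ := hnm
    have := hub l h1 h2
    linarith
  constructor
  · -- part 1
    intro pbar hs
    rcases hs with ⟨_, rfl⟩ | ⟨_, lstar, ht, hf⟩
    · -- pbar = e1
      refine ⟨by rw [my_sum_e1 hk, hqs], fun l h1 h2 => ?_⟩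
      rw [hdq, my_descSort_eq_self my_e1_antitone]
      have he1 : psum (e1 k) l = 1 := by
        have hle := my_psum_le_total (a := e1 k) (by
          intro i; unfold e1; split_ifs <;> norm_num) l
        rw [my_sum_e1 hk] at hle
        have hge : (1:ℝ) ≤ psum (e1 k) l := by
          have := my_psum_mono_len (a := e1 k) (by
            intro i; unfold e1; split_ifs <;> norm_num) h1
          rw [my_psum_one hk] at this
          simpa [e1] using this
        linarith
      rw [he1]
      exact hql l
    · obtain ⟨hant, hble, heq, hone⟩ :=
        my_steepest_facts (le_of_lt hδpos) hpord hp0 ht hf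
      obtain ⟨hls1, hlsk, hsle, hsgt⟩ := ht
      have hlslt : lstar < k := by
        rcases lt_or_eq_of_le hlsk with h | h
        · exact h
        · exfalso
          rw [h, my_psum_steepR δstar p hk (by omega), my_psum_univ, hps] at hsle
          linarith
      refine ⟨?_, fun l h1 h2 => ?_⟩
      · rw [← my_psum_univ pbar, hone k hlslt le_rfl, hqs]
      · rw [hdq, my_descSort_eq_self hant]
        rcases le_or_gt l lstar with h | h
        · rw [heq l h, my_psum_steepR δstar p hk h1]
          have := hub l h1 h2
          linarith
        · rw [hone l h h2]
          exact hql l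
  · -- part 2
    intro δ hδ0 hδlt pbar hs hmaj
    rcases hs with ⟨hle1, _⟩ | ⟨_, lstar, ht, hf⟩
    · -- e1 case impossible
      have hl1d : l1dist p (e1 k) = 2 - 2 * p ⟨0, hk⟩ := my_l1dist_e1 hk ⟨hp0, hps⟩
      have h1 : psum q l0 ≤ 1 := hql l0
      have h2 : p ⟨0, hk⟩ ≤ psum p l0 := by
        have := my_psum_mono_len hp0 hl01
        rwa [my_psum_one hk] at this
      linarith [hδlt, hδ0]
    · obtain ⟨hant, hble, heq, hone⟩ := my_steepest_facts hδ0 hpord hp0 ht hf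
      have hm := hmaj.2 l0 hl01 hl0k
      rw [hdq, my_descSort_eq_self hant] at hm
      have h1 : psum pbar l0 ≤ psum (steepR δ p) l0 := my_psum_le_psum hble l0
      rw [my_psum_steepR δ p hk hl01] at h1
      linarith
end

section
/- Let δ > 0 and let p be a probability distribution on k elements with non-increasingly ordered entries such that ‖p − η‖ > δ, where η is the uniform distribution. Then there exists a unique x* ∈ [0,1] with ε(x*) = δ/2 and a unique y* ∈ [0,1] with γ(y*) = δ/2, and moreover x* > y*. -/
open Finset

section AuxCut

open Finset

private lemma eps_eq' {k : ℕ} (p : Fin k → ℝ) (x : ℝ) :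
    epsFn p x = ∑ i, max (p i - x) 0 := by
  rw [epsFn, Finset.sum_filter]
  refine Finset.sum_congr rfl fun i _ => ?_
  split_ifs with h
  · rw [max_eq_left (by linarith)]
  · rw [max_eq_right (by push_neg at h; linarith)]

private lemma gamma_eq' {k : ℕ} (p : Fin k → ℝ) (y : ℝ) :
    gammaFn p y = ∑ i, max (y - p i) 0 := by
  rw [gammaFn, Finset.sum_filter]
  refine Finset.sum_congr rfl fun i _ => ?_
  split_ifs with h
  · rw [max_eq_left (by linarith)]
  · rw [max_eq_right (by push_neg at h; linarith)]

private lemma eps_cont' {k : ℕ} (p : Fin k → ℝ) : Continuous (epsFn p) := by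
  have : epsFn p = fun x => ∑ i, max (p i - x) 0 := funext (eps_eq' p)
  rw [this]
  exact continuous_finset_sum _ fun i _ =>
    Continuous.max (by continuity) continuous_const

private lemma gamma_cont' {k : ℕ} (p : Fin k → ℝ) : Continuous (gammaFn p) := by
  have : gammaFn p = fun y => ∑ i, max (y - p i) 0 := funext (gamma_eq' p)
  rw [this]
  exact continuous_finset_sum _ fun i _ =>
    Continuous.max (by continuity) continuous_const

private lemma eps_anti' {k : ℕ} (p : Fin k → ℝ) : Antitone (epsFn p) := by
  intro a b hab
  rw [eps_eq', eps_eq']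
  exact Finset.sum_le_sum fun i _ => max_le_max (by linarith) le_rfl

private lemma gamma_mono' {k : ℕ} (p : Fin k → ℝ) : Monotone (gammaFn p) := by
  intro a b hab
  rw [gamma_eq', gamma_eq']
  exact Finset.sum_le_sum fun i _ => max_le_max (by linarith) le_rfl

/-- strict decrease of ε where its value is positive -/
private lemma eps_strict' {k : ℕ} (p : Fin k → ℝ) {a b : ℝ} (hab : a < b)
    (hb : 0 < epsFn p b) : epsFn p b < epsFn p a := by
  rw [eps_eq'] at hb ⊢
  rw [eps_eq']
  obtain ⟨i, -, hi⟩ : ∃ i ∈ Finset.univ, 0 < max (p i - b) 0 := by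
    by_contra h
    push_neg at h
    have : ∑ i : Fin k, max (p i - b) 0 = 0 :=
      le_antisymm (Finset.sum_nonpos fun i hi => h i hi)
        (Finset.sum_nonneg fun i _ => le_max_right _ _)
    linarith
  have hpi : b < p i := by
    rcases max_cases (p i - b) 0 with ⟨h1, h2⟩ | ⟨h1, h2⟩ <;> [linarith; linarith]
  refine Finset.sum_lt_sum (fun j _ => max_le_max (by linarith) le_rfl)
    ⟨i, Finset.mem_univ i, ?_⟩
  rw [max_eq_left (by linarith), max_eq_left (by linarith)]
  linarith

private lemma gamma_strict' {k : ℕ} (p : Fin k → ℝ) {a b : ℝ} (hab : a < b)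
    (ha : 0 < gammaFn p a) : gammaFn p a < gammaFn p b := by
  rw [gamma_eq'] at ha ⊢
  rw [gamma_eq']
  obtain ⟨i, -, hi⟩ : ∃ i ∈ Finset.univ, 0 < max (a - p i) 0 := by
    by_contra h
    push_neg at h
    have : ∑ i : Fin k, max (a - p i) 0 = 0 :=
      le_antisymm (Finset.sum_nonpos fun i hi => h i hi)
        (Finset.sum_nonneg fun i _ => le_max_right _ _)
    linarith
  have hpi : p i < a := by
    rcases max_cases (a - p i) 0 with ⟨h1, h2⟩ | ⟨h1, h2⟩ <;> [linarith; linarith]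
  refine Finset.sum_lt_sum (fun j _ => max_le_max (by linarith) le_rfl)
    ⟨i, Finset.mem_univ i, ?_⟩
  rw [max_eq_left (by linarith), max_eq_left (by linarith)]
  linarith

/-- ε(t) − γ(t) = 1 − k t -/
private lemma eps_sub_gamma' {k : ℕ} (p : Fin k → ℝ) (hp : IsProbDist p) (t : ℝ) :
    epsFn p t - gammaFn p t = 1 - k * t := by
  rw [eps_eq', gamma_eq', ← Finset.sum_sub_distrib]
  have : ∀ i : Fin k, max (p i - t) 0 - max (t - p i) 0 = p i - t := by
    intro i
    rcases le_total (p i) t with h | h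
    · rw [max_eq_right (by linarith), max_eq_left (by linarith)]; ring
    · rw [max_eq_left (by linarith), max_eq_right (by linarith)]; ring
  rw [Finset.sum_congr rfl fun i _ => this i, Finset.sum_sub_distrib, hp.2,
    Finset.sum_const, Finset.card_univ, Fintype.card_fin, nsmul_eq_mul]

private lemma l1_eq' {k : ℕ} (p : Fin k → ℝ) :
    l1dist p (unif k) = epsFn p (k : ℝ)⁻¹ + gammaFn p (k : ℝ)⁻¹ := by
  rw [eps_eq', gamma_eq', l1dist, ← Finset.sum_add_distrib]
  refine Finset.sum_congr rfl fun i _ => ?_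
  rcases le_total (p i) (k : ℝ)⁻¹ with h | h
  · rw [unif, abs_of_nonpos (by linarith), max_eq_right (by linarith),
      max_eq_left (by linarith)]
    ring
  · rw [unif, abs_of_nonneg (by linarith), max_eq_left (by linarith),
      max_eq_right (by linarith)]
    ring

end AuxCut

/-- if `‖p − η‖ > δ` then the cutting level `x*` and the filling level `y*`
exist, are unique in `[0,1]`, and satisfy `x* > y*`. -/
theorem cutting_filling_levels_exist_unique {k : ℕ} (δ : ℝ) (hδ : 0 < δ)
    (p : Fin k → ℝ) (hp : IsProbDist p) (hord : Antitone p)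
    (hpd : δ < l1dist p (unif k)) :
    ∃ x y : ℝ, x ∈ Set.Icc (0 : ℝ) 1 ∧ y ∈ Set.Icc (0 : ℝ) 1 ∧
      epsFn p x = δ / 2 ∧ gammaFn p y = δ / 2 ∧
      (∀ x' ∈ Set.Icc (0 : ℝ) 1, epsFn p x' = δ / 2 → x' = x) ∧
      (∀ y' ∈ Set.Icc (0 : ℝ) 1, gammaFn p y' = δ / 2 → y' = y) ∧
      y < x := by
  have hk : 0 < k := by
    rcases Nat.eq_zero_or_pos k with hk | hk
    · exfalso; subst hk; simpa using hp.2
    · exact hk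
  have hkinv : (0:ℝ) < (k : ℝ)⁻¹ := by positivity
  -- the key balance point
  have hbal : epsFn p (k : ℝ)⁻¹ = gammaFn p (k : ℝ)⁻¹ := by
    have := eps_sub_gamma' p hp ((k : ℝ)⁻¹)
    have hkk : (k : ℝ) * (k : ℝ)⁻¹ = 1 := by
      field_simp
    linarith
  have hεη : δ / 2 < epsFn p (k : ℝ)⁻¹ := by
    have := l1_eq' p
    linarith
  -- boundary values
  have hε1 : epsFn p 1 = 0 := by
    rw [eps_eq']
    refine Finset.sum_eq_zero fun i _ => ?_
    have hi1 : p i ≤ 1 := by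
      rw [← hp.2]
      exact Finset.single_le_sum (fun j _ => hp.1 j) (Finset.mem_univ i)
    rw [max_eq_right (by linarith)]
  have hε0 : epsFn p 0 = 1 := by
    rw [eps_eq']
    rw [Finset.sum_congr rfl fun i _ => by rw [sub_zero, max_eq_left (hp.1 i)]]
    exact hp.2
  have hγ0 : gammaFn p 0 = 0 := by
    rw [gamma_eq']
    refine Finset.sum_eq_zero fun i _ => ?_
    rw [zero_sub, max_eq_right (by have := hp.1 i; linarith)]
  have hkinv1 : (k : ℝ)⁻¹ ≤ 1 := by
    rw [inv_le_one_iff₀]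
    right
    exact_mod_cast hk
  -- existence of x on [k⁻¹, 1]
  obtain ⟨x, hxmem, hxval⟩ : ∃ x ∈ Set.Icc ((k:ℝ)⁻¹) 1, epsFn p x = δ / 2 := by
    have := intermediate_value_Icc' (α := ℝ) hkinv1 (eps_cont' p).continuousOn
    exact this ⟨by linarith [hε1], le_of_lt hεη⟩
  -- existence of y on [0, k⁻¹]
  obtain ⟨y, hymem, hyval⟩ : ∃ y ∈ Set.Icc (0:ℝ) ((k:ℝ)⁻¹), gammaFn p y = δ / 2 := by
    have := intermediate_value_Icc (α := ℝ) (le_of_lt hkinv) (gamma_cont' p).continuousOn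
    exact this ⟨by linarith [hγ0], by rw [← hbal]; exact le_of_lt hεη⟩
  have hxIcc : x ∈ Set.Icc (0:ℝ) 1 := ⟨le_trans (le_of_lt hkinv) hxmem.1, hxmem.2⟩
  have hyIcc : y ∈ Set.Icc (0:ℝ) 1 := ⟨hymem.1, le_trans hymem.2 hkinv1⟩
  -- strictness: x > k⁻¹ > y
  have hxgt : (k : ℝ)⁻¹ < x := by
    rcases lt_or_ge ((k:ℝ)⁻¹) x with h | h
    · exact h
    · exfalso
      have := eps_anti' p h
      linarith
  have hylt : y < (k : ℝ)⁻¹ := by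
    rcases lt_or_ge y ((k:ℝ)⁻¹) with h | h
    · exact h
    · exfalso
      have := gamma_mono' p h
      linarith
  refine ⟨x, y, hxIcc, hyIcc, hxval, hyval, ?_, ?_, lt_trans hylt hxgt⟩
  · intro x' _ hx'
    by_contra hne
    rcases lt_or_gt_of_ne hne with h | h
    · have := eps_strict' p h (by rw [hxval]; linarith)
      linarith
    · have := eps_strict' p h (by rw [hx']; linarith)
      linarith
  · intro y' _ hy'
    by_contra hne
    rcases lt_or_gt_of_ne hne with h | h
    · have := gamma_strict' p h (by rw [hy']; linarith)
      linarith
    · have := gamma_strict' p h (by rw [hyval]; linarith)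
      linarith
end

section
/- Let p be a probability distribution on k elements with non-increasingly ordered entries and let δ ≥ 0. Then the steepest δ-approximation p̄^(δ) of p is a probability distribution (its entries are nonnegative and sum to 1), its entries are non-increasingly ordered, and ‖p − p̄^(δ)‖ ≤ δ. -/
open Finset

private lemma psum_succ' {k : ℕ} (a : Fin k → ℝ) (l : ℕ) (h : l < k) :
    psum a (l + 1) = psum a l + a ⟨l, h⟩ := by
  unfold psum
  have hs : (univ.filter (fun i : Fin k => (i : ℕ) < l + 1)) =
      insert ⟨l, h⟩ (univ.filter (fun i : Fin k => (i : ℕ) < l)) := by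
    ext i
    simp [Nat.lt_succ_iff_lt_or_eq, Fin.ext_iff, or_comm]
    constructor <;> intro h' <;> omega
  rw [hs, Finset.sum_insert (by simp)]
  ring

private lemma psum_k' {k : ℕ} (a : Fin k → ℝ) : psum a k = ∑ i, a i := by
  unfold psum
  rw [Finset.filter_true_of_mem (fun i _ => i.isLt)]

private lemma sum_split' {k : ℕ} (a : Fin k → ℝ) (l : ℕ) :
    ∑ i, a i = psum a l + ∑ i ∈ univ.filter (fun i : Fin k => l ≤ (i : ℕ)), a i := by
  rw [psum, ← Finset.sum_filter_add_sum_filter_not univ (fun i : Fin k => (i : ℕ) < l) a]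
  congr 1
  exact Finset.sum_congr (by ext i; simp [not_lt]) (fun _ _ => rfl)

private lemma psum_steepR' {k : ℕ} (δ : ℝ) (p : Fin k → ℝ) (l : ℕ) (h1 : 1 ≤ l)
    (hk : 0 < k) : psum (steepR δ p) l = psum p l + δ / 2 := by
  unfold psum
  have hc : ∀ i ∈ univ.filter (fun i : Fin k => (i : ℕ) < l),
      steepR δ p i = p i + (if i = (⟨0, hk⟩ : Fin k) then δ / 2 else 0) := by
    intro i _
    by_cases h : (i : ℕ) = 0 <;> simp [steepR, h, Fin.ext_iff]
  rw [Finset.sum_congr rfl hc, Finset.sum_add_distrib,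
    Finset.sum_ite_eq' _ (⟨0, hk⟩ : Fin k) (fun _ => δ / 2), if_pos (by simpa using (show 0 < l by omega))]

/-- the steepest `δ`-approximation of `p` is a non-increasingly ordered
probability distribution within ℓ¹ distance `δ` of `p`. -/
theorem steepest_isProbDist {k : ℕ} (δ : ℝ) (hδ : 0 ≤ δ)
    (p : Fin k → ℝ) (hp : IsProbDist p) (hord : Antitone p)
    (pbar : Fin k → ℝ) (hpbar : IsSteepest δ p pbar) :
    IsProbDist pbar ∧ Antitone pbar ∧ l1dist p pbar ≤ δ := by
  have hk : 0 < k := by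
    rcases Nat.eq_zero_or_pos k with h | h
    · exfalso; have h2 := hp.2; subst h; simp at h2
    · exact h
  rcases hpbar with ⟨hd, rfl⟩ | ⟨hd, lstar, ⟨hl1, hlk, hS1, hSk⟩, hdef⟩
  · refine ⟨⟨?_, ?_⟩, ?_, hd⟩
    · intro i; unfold e1; split_ifs <;> norm_num
    · have hc : ∀ i : Fin k, e1 k i = if i = (⟨0, hk⟩ : Fin k) then (1 : ℝ) else 0 := by
        intro i; simp [e1, Fin.ext_iff]
      rw [Finset.sum_congr rfl (fun i _ => hc i),
        Finset.sum_ite_eq' _ (⟨0, hk⟩ : Fin k) (fun _ => (1 : ℝ)), if_pos (mem_univ _)]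
    · intro i j hij
      unfold e1
      by_cases hj : (j : ℕ) = 0
      · have hi : (i : ℕ) = 0 := Nat.le_zero.mp (hj ▸ hij)
        simp [hi, hj]
      · rw [if_neg hj]
        split_ifs <;> norm_num
  · -- nontrivial case
    set r := steepR δ p with hr
    set S := psum r lstar with hSdef
    have hp1 := hp.1
    have hp2 := hp.2
    have hr0 : ∀ i : Fin k, 0 ≤ r i := by
      intro i
      by_cases h : (i : ℕ) = 0 <;> simp [hr, steepR, h] <;> [linarith [hp1 i]; exact hp1 i]
    have hrp : ∀ i : Fin k, p i ≤ r i := by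
      intro i
      by_cases h : (i : ℕ) = 0 <;> simp [hr, steepR, h]; linarith
    have hrant : ∀ i j : Fin k, i ≤ j → r j ≤ r i := by
      intro i j hij
      by_cases h : (j : ℕ) = 0
      · have hi : (i : ℕ) = 0 := Nat.le_zero.mp (h ▸ hij)
        have : i = j := Fin.ext (by omega)
        rw [this]
      · calc r j = p j := by simp [hr, steepR, h]
          _ ≤ p i := hord hij
          _ ≤ r i := hrp i
    have hSp : S = psum p lstar + δ / 2 := psum_steepR' δ p lstar hl1 hk
    -- key inequality at the truncation index when lstar < k
    have hkey : ∀ h : lstar < k, 1 - S < p ⟨lstar, h⟩ := by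
      intro h
      have h1 := hSk h
      rw [psum_succ' r lstar h] at h1
      have h2 : r ⟨lstar, h⟩ = p ⟨lstar, h⟩ := by
        simp only [hr, steepR, Fin.val_mk]
        exact if_neg (by omega)
      rw [h2] at h1
      linarith
    have hnn : ∀ i, 0 ≤ pbar i := by
      intro i
      rw [hdef i]
      split_ifs with h1 h2
      · exact hr0 i
      · linarith
      · exact le_refl 0
    have hant : Antitone pbar := by
      intro i j hij
      by_cases hj : (j : ℕ) < lstar
      · have hi : (i : ℕ) < lstar := lt_of_le_of_lt hij hj
        rw [hdef i, hdef j, if_pos hi, if_pos hj]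
        exact hrant i j hij
      · by_cases hj2 : (j : ℕ) = lstar
        · have hlt : lstar < k := hj2 ▸ j.isLt
          by_cases hi : (i : ℕ) < lstar
          · rw [hdef i, hdef j, if_pos hi, if_neg hj, if_pos hj2]
            have h3 : p (⟨lstar, hlt⟩ : Fin k) ≤ p i := hord (by simpa [Fin.le_def] using hi.le)
            have := hkey hlt
            calc (1 : ℝ) - S ≤ p (⟨lstar, hlt⟩ : Fin k) := le_of_lt (hkey hlt)
              _ ≤ p i := h3
              _ ≤ r i := hrp i
          · have hi2 : (i : ℕ) = lstar := by
              have := Fin.le_def.mp hij; omega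
            rw [hdef i, hdef j, if_neg hi, if_pos hi2, if_neg hj, if_pos hj2]
        · rw [hdef j, if_neg hj, if_neg hj2]
          exact hnn i
    by_cases hlt : lstar < k
    · -- lstar < k
      set jl : Fin k := ⟨lstar, hlt⟩ with hjl
      have hsum : ∑ i, pbar i = 1 := by
        rw [Finset.sum_congr rfl (fun i _ => hdef i), Finset.sum_ite]
        have h2 : ∑ i ∈ univ.filter (fun i : Fin k => ¬(i : ℕ) < lstar),
            (if (i : ℕ) = lstar then 1 - S else 0) = 1 - S := by
          have hc : ∀ i ∈ univ.filter (fun i : Fin k => ¬(i : ℕ) < lstar),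
              (if (i : ℕ) = lstar then 1 - S else 0) = if i = jl then 1 - S else 0 := by
            intro i _
            simp [hjl, Fin.ext_iff]
          rw [Finset.sum_congr rfl hc, Finset.sum_ite_eq' _ jl (fun _ => 1 - S),
            if_pos (by simp [hjl])]
        rw [h2]
        have : ∑ i ∈ univ.filter (fun i : Fin k => (i : ℕ) < lstar), r i = S := rfl
        rw [this]; ring
      refine ⟨⟨hnn, hsum⟩, hant, ?_⟩
      -- the distance
      have hl1d : l1dist p pbar =
          (∑ i ∈ univ.filter (fun i : Fin k => (i : ℕ) < lstar), |p i - pbar i|) +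
          ∑ i ∈ univ.filter (fun i : Fin k => lstar ≤ (i : ℕ)), |p i - pbar i| :=
        sum_split' (fun i => |p i - pbar i|) lstar
      have hfirst : (∑ i ∈ univ.filter (fun i : Fin k => (i : ℕ) < lstar), |p i - pbar i|)
          = δ / 2 := by
        have hc : ∀ i ∈ univ.filter (fun i : Fin k => (i : ℕ) < lstar),
            |p i - pbar i| = if i = (⟨0, hk⟩ : Fin k) then δ / 2 else 0 := by
          intro i hi
          simp only [Finset.mem_filter] at hi
          rw [hdef i, if_pos hi.2]
          by_cases h : (i : ℕ) = 0
          · rw [if_pos (Fin.ext h)]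
            have hri : r i = p i + δ / 2 := by simp [hr, steepR, h]
            rw [hri, show p i - (p i + δ / 2) = -(δ / 2) by ring, abs_neg,
              abs_of_nonneg (by linarith)]
          · rw [if_neg (by simp [Fin.ext_iff, h])]
            simp [hr, steepR, h]
        rw [Finset.sum_congr rfl hc, Finset.sum_ite_eq' _ (⟨0, hk⟩ : Fin k) (fun _ => δ / 2),
          if_pos (by simpa using (show 0 < lstar by omega))]
      have hsecond : (∑ i ∈ univ.filter (fun i : Fin k => lstar ≤ (i : ℕ)), |p i - pbar i|)
          = (∑ i ∈ univ.filter (fun i : Fin k => lstar ≤ (i : ℕ)), p i) + (S - 1) := by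
        have hc : ∀ i ∈ univ.filter (fun i : Fin k => lstar ≤ (i : ℕ)),
            |p i - pbar i| = p i + (if i = jl then S - 1 else 0) := by
          intro i hi
          simp only [Finset.mem_filter] at hi
          rw [hdef i, if_neg (by omega)]
          by_cases h : (i : ℕ) = lstar
          · have hij2 : i = jl := Fin.ext (by simpa [hjl] using h)
            rw [if_pos h, if_pos hij2]
            have hpi : p i = p jl := by rw [hij2]
            rw [abs_of_nonneg (by have := hkey hlt; rw [hpi]; linarith)]
            ring
          · rw [if_neg h, if_neg (by simp [hjl, Fin.ext_iff, h])]
            rw [sub_zero, abs_of_nonneg (hp1 i), add_zero]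
        rw [Finset.sum_congr rfl hc, Finset.sum_add_distrib,
          Finset.sum_ite_eq' _ jl (fun _ => S - 1), if_pos (by simp [hjl])]
      have htot : 1 = psum p lstar +
          ∑ i ∈ univ.filter (fun i : Fin k => lstar ≤ (i : ℕ)), p i := by
        rw [← hp2]; exact sum_split' p lstar
      rw [hl1d, hfirst, hsecond]
      linarith
    · -- lstar = k
      have hke : lstar = k := le_antisymm hlk (not_lt.mp hlt)
      have hallr : ∀ i : Fin k, pbar i = r i := by
        intro i
        rw [hdef i, if_pos (by omega)]
      have hSk' : S = 1 + δ / 2 := by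
        rw [hSp, hke, psum_k', hp2]
      have hδ0 : δ = 0 := by
        have h5 := hS1
        rw [hSk'] at h5
        linarith
      have hsum : ∑ i, pbar i = 1 := by
        rw [Finset.sum_congr rfl (fun i _ => hallr i)]
        have h4 : S = ∑ i, r i := by rw [hSdef, hke]; exact psum_k' r
        rw [← h4, hSk', hδ0]; norm_num
      refine ⟨⟨hnn, hsum⟩, hant, ?_⟩
      have : ∀ i : Fin k, |p i - pbar i| = 0 := by
        intro i
        rw [hallr i]
        by_cases h : (i : ℕ) = 0 <;> simp [hr, steepR, h, hδ0]
      rw [l1dist, Finset.sum_congr rfl (fun i _ => this i)]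
      simpa using hδ
end
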